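/- Let F ⪯ A be a face and let M be a finitely generated ℤ^d-graded S_A-submodule of ℂ[ℤ^d]. Then for every γ ∈ ℤ^d, the degree-γ component of the top cohomology H^{d_{A/F}}(℧•_F(M)) has ℂ-dimension at most 1. -/

import Mathlib

/-!
Common setup: `A` is a `d × n` integer matrix, given by its columns `a : Fin n → Lat d`,
with `ℤA = ℤ^d` (`SpansZ`) and `ℕA` pointed (`Pointed`).  Faces, semigroups, graded
modules, quasidegree sets, the dualizing complex `ω•_{S_A}` and the Ishida complexes
`℧•_F` are formalized below; all cohomology statements are expressed via the
(ℤ^d-)graded components of these complexes.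
-/

namespace GKZ

open scoped Classical

noncomputable section

abbrev Lat (d : ℕ) := Fin d → ℤ
abbrev CS (d : ℕ) := Fin d → ℂ
abbrev Laur (d : ℕ) := AddMonoidAlgebra ℂ (Lat d)

/-- Inclusion ℤ^d ⊆ ℂ^d. -/
def toC {d : ℕ} (α : Lat d) : CS d := fun i => (α i : ℂ)
/-- Inclusion ℤ^d ⊆ ℝ^d. -/
def toR {d : ℕ} (α : Lat d) : Fin d → ℝ := fun i => (α i : ℝ)
/-- The monomial t^α in the Laurent polynomial ring ℂ[ℤ^d]. -/
def mono {d : ℕ} (α : Lat d) : Laur d := AddMonoidAlgebra.single α 1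

variable {d n : ℕ}

/-- The affine semigroup ℕA generated by the columns of `A`. -/
def NA (a : Fin n → Lat d) : AddSubmonoid (Lat d) := AddSubmonoid.closure (Set.range a)

/-- ℕA is pointed: ℕA ∩ (−ℕA) = {0}. -/
def Pointed (a : Fin n → Lat d) : Prop := ∀ x ∈ NA a, -x ∈ NA a → x = 0

/-- ℤA = ℤ^d. -/
def SpansZ (a : Fin n → Lat d) : Prop :=
  AddSubgroup.closure (Set.range a) = (⊤ : AddSubgroup (Lat d))

/-- The real cone ℝ₊F spanned by the columns indexed by `F`. -/
def cone (a : Fin n → Lat d) (F : Set (Fin n)) : Set (Fin d → ℝ) :=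
  { x | ∃ c : Fin n → ℝ, (∀ i, 0 ≤ c i) ∧ (∀ i, i ∉ F → c i = 0) ∧ x = ∑ i, c i • toR (a i) }

/-- `F` is a face of `A`: ℝ₊F is a face of the cone ℝ₊A, and `F` consists of all the
columns of `A` lying on that face. -/
def IsFace (a : Fin n → Lat d) (F : Set (Fin n)) : Prop :=
  (∀ x y, x ∈ cone a Set.univ → y ∈ cone a Set.univ →
      x + y ∈ cone a F → x ∈ cone a F ∧ y ∈ cone a F) ∧
  (∀ i, toR (a i) ∈ cone a F → i ∈ F)

/-- ℕF. -/
def NFace (a : Fin n → Lat d) (F : Set (Fin n)) : AddSubmonoid (Lat d) :=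
  AddSubmonoid.closure (a '' F)

/-- ℤF. -/
def ZFace (a : Fin n → Lat d) (F : Set (Fin n)) : AddSubgroup (Lat d) :=
  AddSubgroup.closure (a '' F)

/-- ℂF ⊆ ℂ^d. -/
def CFace (a : Fin n → Lat d) (F : Set (Fin n)) : Submodule ℂ (CS d) :=
  Submodule.span ℂ (toC '' (a '' F))

/-- d_F, the rank of ℤF. -/
def dimF (a : Fin n → Lat d) (F : Set (Fin n)) : ℕ :=
  Module.finrank ℤ (Submodule.span ℤ (a '' F))

/-- σ_F, the sum of the columns of F. -/
def sigmaF (a : Fin n → Lat d) (F : Set (Fin n)) : Lat d :=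
  ∑ i : Fin n, if i ∈ F then a i else 0

/-- ε_A = a_1 + ⋯ + a_n. -/
def epsA (a : Fin n → Lat d) : Lat d := ∑ i : Fin n, a i

/-- ℕA − ℕF ⊆ ℤ^d. -/
def NAmNF (a : Fin n → Lat d) (F : Set (Fin n)) : Set (Lat d) :=
  {γ | ∃ u ∈ NA a, ∃ v ∈ NFace a F, γ = u - v}

/-- ℕF − ℕA ⊆ ℤ^d. -/
def NFmNA (a : Fin n → Lat d) (F : Set (Fin n)) : Set (Lat d) :=
  {γ | ∃ u ∈ NFace a F, ∃ v ∈ NA a, γ = u - v}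

/-- ℕF − ℕH ⊆ ℤ^d. -/
def NFmNH (a : Fin n → Lat d) (F H : Set (Fin n)) : Set (Lat d) :=
  {γ | ∃ u ∈ NFace a F, ∃ v ∈ NFace a H, γ = u - v}

/-- ℕA is normal: ℕA = ℤ^d ∩ ℝ₊A. -/
def Normal (a : Fin n → Lat d) : Prop :=
  ∀ γ : Lat d, γ ∈ NA a ↔ toR γ ∈ cone a Set.univ

/-- The Zariski closure of a subset of ℂ^d. -/
def zClosure {d : ℕ} (T : Set (CS d)) : Set (CS d) :=
  {x | ∀ p : MvPolynomial (Fin d) ℂ, (∀ y ∈ T, MvPolynomial.eval y p = 0) →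
    MvPolynomial.eval x p = 0}

def IsZClosed {d : ℕ} (Z : Set (CS d)) : Prop := zClosure Z ⊆ Z

/-- Irreducibility of a subset of ℂ^d in the Zariski topology. -/
def ZIrred {d : ℕ} (Z : Set (CS d)) : Prop :=
  Z.Nonempty ∧ ∀ C₁ C₂ : Set (CS d), IsZClosed C₁ → IsZClosed C₂ →
    Z ⊆ C₁ ∪ C₂ → Z ⊆ C₁ ∨ Z ⊆ C₂

/-- Krull (topological) dimension of a subset of ℂ^d with the Zariski topology:
the Krull dimension of the poset of irreducible Zariski-closed subsets contained in it. -/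
def zdim {d : ℕ} (Z : Set (CS d)) : WithBot ℕ∞ :=
  Order.krullDim {C : Set (CS d) // C ⊆ Z ∧ IsZClosed C ∧ ZIrred C}

/-- `Z` is an irreducible component of `W`: a maximal irreducible Zariski-closed subset. -/
def IsIrredComp {d : ℕ} (Z W : Set (CS d)) : Prop :=
  Z ⊆ W ∧ IsZClosed Z ∧ ZIrred Z ∧
    ∀ Z' : Set (CS d), IsZClosed Z' → ZIrred Z' → Z ⊆ Z' → Z' ⊆ W → Z' = Z

/-- The type of faces of `A`. -/
def FaceT (a : Fin n → Lat d) := {G : Set (Fin n) // IsFace a G}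

instance (a : Fin n → Lat d) : Finite (FaceT a) := by
  unfold FaceT; infer_instance

noncomputable instance (a : Fin n → Lat d) : Fintype (FaceT a) := Fintype.ofFinite _

/-- Degree set of the localization M[∂^{−G}] of the monomial module with degree set `E`:
the set E − ℕG. -/
def locE (a : Fin n → Lat d) (E : Set (Lat d)) (G : Set (Fin n)) : Set (Lat d) :=
  {γ | ∃ f ∈ NFace a G, γ + f ∈ E}

/-- Functions supported on a subset, as a ℂ-submodule of the function space. -/
def funSupported {ι : Type*} (S : Set ι) : Submodule ℂ (ι → ℂ) where
  carrier := {c | ∀ i, i ∉ S → c i = 0}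
  add_mem' := by
    intro x y hx hy i hi
    simp only [Set.mem_setOf_eq] at hx hy
    simp [Pi.add_apply, hx i hi, hy i hi]
  zero_mem' := by intro i _; rfl
  smul_mem' := by
    intro r x hx i hi
    simp only [Set.mem_setOf_eq] at hx
    simp [Pi.smul_apply, hx i hi]

/-- The degree-γ part of the term of the Ishida complex ℧•_F(M) (base face `F`, monomial
module with degree set `E`) whose summands are indexed by the faces of absolute dimension
`j` (cohomological degree `j − d_F`): functions on the faces `G ⊇ F` with `d_G = j` and
`γ ∈ E − ℕG`. -/
def ishChain (a : Fin n → Lat d) (E : Set (Lat d)) (F : Set (Fin n)) (j : ℤ) (γ : Lat d) :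
    Submodule ℂ (FaceT a → ℂ) :=
  funSupported {G : FaceT a | F ⊆ G.1 ∧ (dimF a G.1 : ℤ) = j ∧ γ ∈ locE a E G.1}

/-- The differential of the Ishida complex (in each ℤ^d-degree): the component from a face
`G'` into a face `G''` covering it is `ε G' G''` times the natural localization map. -/
def ishDelta (a : Fin n → Lat d) (ε : Set (Fin n) → Set (Fin n) → ℂ) :
    (FaceT a → ℂ) →ₗ[ℂ] (FaceT a → ℂ) where
  toFun c := fun G'' => ∑ G' : FaceT a,
    if G'.1 ⊆ G''.1 ∧ dimF a G''.1 = dimF a G'.1 + 1 then ε G'.1 G''.1 * c G' else 0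
  map_add' x y := by
    funext G''
    simp only [Pi.add_apply, ← Finset.sum_add_distrib]
    refine Finset.sum_congr rfl fun G' _ => ?_
    by_cases h : G'.1 ⊆ G''.1 ∧ dimF a G''.1 = dimF a G'.1 + 1
    · simp [h, mul_add]
    · simp [h]
  map_smul' r x := by
    funext G''
    simp only [Pi.smul_apply, smul_eq_mul, RingHom.id_apply, Finset.mul_sum]
    refine Finset.sum_congr rfl fun G' _ => ?_
    by_cases h : G'.1 ⊆ G''.1 ∧ dimF a G''.1 = dimF a G'.1 + 1
    · simp only [h, and_self, if_true]; ring
    · simp [h]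

/-- Degree-γ cocycles of the Ishida complex at absolute dimension `j`. -/
def ishZ (a : Fin n → Lat d) (E : Set (Lat d)) (ε : Set (Fin n) → Set (Fin n) → ℂ)
    (F : Set (Fin n)) (j : ℤ) (γ : Lat d) : Submodule ℂ (FaceT a → ℂ) :=
  ishChain a E F j γ ⊓ LinearMap.ker (ishDelta a ε)

/-- Degree-γ coboundaries of the Ishida complex at absolute dimension `j`. -/
def ishB (a : Fin n → Lat d) (E : Set (Lat d)) (ε : Set (Fin n) → Set (Fin n) → ℂ)
    (F : Set (Fin n)) (j : ℤ) (γ : Lat d) : Submodule ℂ (FaceT a → ℂ) :=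
  Submodule.map (ishDelta a ε) (ishChain a E F (j - 1) γ)

/-- The degree-γ component of the cohomology of the Ishida complex ℧•_F(M) at absolute
dimension `j` (cohomological degree `j − d_F`). -/
abbrev ishH (a : Fin n → Lat d) (E : Set (Lat d)) (ε : Set (Fin n) → Set (Fin n) → ℂ)
    (F : Set (Fin n)) (j : ℤ) (γ : Lat d) :=
  ↥(ishZ a E ε F j γ) ⧸
    Submodule.comap (ishZ a E ε F j γ).subtype (ishB a E ε F j γ)

/-- Nonvanishing of the degree-γ component of the cohomology of the Ishida complex. -/
def ishHne (a : Fin n → Lat d) (E : Set (Lat d)) (ε : Set (Fin n) → Set (Fin n) → ℂ)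
    (F : Set (Fin n)) (j : ℤ) (γ : Lat d) : Prop :=
  ¬ (ishZ a E ε F j γ ≤ ishB a E ε F j γ)

/-- Degree-γ part of the term of ω•_{S_A} in cohomological degree `i`:
functions on the faces `G` with `d_{A/G} = i` and `γ ∈ ℕG − ℕA`. -/
def omChain (a : Fin n → Lat d) (i : ℤ) (γ : Lat d) : Submodule ℂ (FaceT a → ℂ) :=
  funSupported {G : FaceT a | (dimF a G.1 : ℤ) = (d : ℤ) - i ∧ γ ∈ NFmNA a G.1}

/-- Degree-γ part of the differential of ω•_{S_A}: the component from a face `G'` to a face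
`G''` covered by it is `ε G' G''` times the natural projection ℂ{ℕG'−ℕA} → ℂ{ℕG''−ℕA}. -/
def omDelta (a : Fin n → Lat d) (ε : Set (Fin n) → Set (Fin n) → ℂ) (γ : Lat d) :
    (FaceT a → ℂ) →ₗ[ℂ] (FaceT a → ℂ) where
  toFun c := fun G'' =>
    if γ ∈ NFmNA a G''.1 then
      ∑ G' : FaceT a,
        if G''.1 ⊆ G'.1 ∧ dimF a G'.1 = dimF a G''.1 + 1 then ε G'.1 G''.1 * c G' else 0
    else 0
  map_add' x y := by
    funext G''
    by_cases hγ : γ ∈ NFmNA a G''.1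
    · simp only [Pi.add_apply, hγ, if_true, ← Finset.sum_add_distrib]
      refine Finset.sum_congr rfl fun G' _ => ?_
      by_cases h : G''.1 ⊆ G'.1 ∧ dimF a G'.1 = dimF a G''.1 + 1
      · simp [h, mul_add]
      · simp [h]
    · simp [hγ]
  map_smul' r x := by
    funext G''
    by_cases hγ : γ ∈ NFmNA a G''.1
    · simp only [Pi.smul_apply, smul_eq_mul, RingHom.id_apply, hγ, if_true, Finset.mul_sum]
      refine Finset.sum_congr rfl fun G' _ => ?_
      by_cases h : G''.1 ⊆ G'.1 ∧ dimF a G'.1 = dimF a G''.1 + 1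
      · simp only [h, and_self, if_true]; ring
      · simp [h]
    · simp [hγ]

/-- Degree-γ cocycles of ω•_{S_A} in cohomological degree `i`. -/
def omZ (a : Fin n → Lat d) (ε : Set (Fin n) → Set (Fin n) → ℂ) (i : ℤ) (γ : Lat d) :
    Submodule ℂ (FaceT a → ℂ) :=
  omChain a i γ ⊓ LinearMap.ker (omDelta a ε γ)

/-- Degree-γ coboundaries of ω•_{S_A} in cohomological degree `i`. -/
def omB (a : Fin n → Lat d) (ε : Set (Fin n) → Set (Fin n) → ℂ) (i : ℤ) (γ : Lat d) :
    Submodule ℂ (FaceT a → ℂ) :=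
  Submodule.map (omDelta a ε γ) (omChain a (i - 1) γ)

/-- Nonvanishing of H^i(ω•_{S_A})_γ. -/
def omHne (a : Fin n → Lat d) (ε : Set (Fin n) → Set (Fin n) → ℂ) (i : ℤ) (γ : Lat d) : Prop :=
  ¬ (omZ a ε i γ ≤ omB a ε i γ)

/-- A ℤ^d-graded S_A-module, presented by its grading together with the (degree-shifting)
action of the monomials t^u, u ∈ ℕA. -/
structure GradedSAMod (a : Fin n → Lat d) (M : Type) [AddCommGroup M] [Module ℂ M] where
  decomp : Lat d → Submodule ℂ M
  internal : DirectSum.IsInternal decomp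
  act : (u : Lat d) → u ∈ NA a → (M →ₗ[ℂ] M)
  act_zero : ∀ h0 : (0 : Lat d) ∈ NA a, act 0 h0 = LinearMap.id
  act_add : ∀ (u : Lat d) (hu : u ∈ NA a) (v : Lat d) (hv : v ∈ NA a) (huv : u + v ∈ NA a),
    act (u + v) huv = (act u hu).comp (act v hv)
  act_grade : ∀ (u : Lat d) (hu : u ∈ NA a) (γ : Lat d), ∀ m ∈ decomp γ,
    act u hu m ∈ decomp (γ + u)

/-- Finite generation over S_A. -/
def GradedSAMod.FGmod {a : Fin n → Lat d} {M : Type} [AddCommGroup M] [Module ℂ M]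
    (g : GradedSAMod a M) : Prop :=
  ∃ S : Finset M, ∀ m : M,
    m ∈ Submodule.span ℂ {x | ∃ u, ∃ hu : u ∈ NA a, ∃ s ∈ S, x = g.act u hu s}

/-- Degrees of nonzero homogeneous elements of `M` that survive in the localization
`M[∂^{−H}]` (i.e. are killed by no power of t^{σ_H}). -/
def GradedSAMod.survTdeg {a : Fin n → Lat d} {M : Type} [AddCommGroup M] [Module ℂ M]
    (g : GradedSAMod a M) (H : Set (Fin n)) : Set (Lat d) :=
  {γ | ∃ m ∈ g.decomp γ, m ≠ 0 ∧ ∀ (k : ℕ) (hk : k • sigmaF a H ∈ NA a), g.act _ hk m ≠ 0}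

/-- The quasidegree set of the localization `M[∂^{−H}]` of a finitely generated graded
module `M`: the union over `k` of the Zariski closures of the true degree sets of the
finitely generated graded submodules t^{−kσ_H}·M of the localization. -/
def GradedSAMod.qdegLoc {a : Fin n → Lat d} {M : Type} [AddCommGroup M] [Module ℂ M]
    (g : GradedSAMod a M) (H : Set (Fin n)) : Set (CS d) :=
  ⋃ k : ℕ, zClosure (toC '' {γ : Lat d | γ + k • sigmaF a H ∈ g.survTdeg H})

/-- A ℂ-submodule is graded: it is spanned by its homogeneous elements. -/
def IsGradedSubC {d : ℕ} {M : Type} [AddCommGroup M] [Module ℂ M]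
    (decomp : Lat d → Submodule ℂ M) (N : Submodule ℂ M) : Prop :=
  N = Submodule.span ℂ ((N : Set M) ∩ ⋃ γ : Lat d, (decomp γ : Set M))

/-- A ℂ-submodule is an S_A-submodule: stable under the monomial action. -/
def IsStableSub {a : Fin n → Lat d} {M : Type} [AddCommGroup M] [Module ℂ M]
    (g : GradedSAMod a M) (N : Submodule ℂ M) : Prop :=
  ∀ (u : Lat d) (hu : u ∈ NA a), ∀ m ∈ N, g.act u hu m ∈ N

/-- The semigroup ring S_A = ℂ[ℕA] as a subalgebra of ℂ[ℤ^d]. -/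
def SAlg (a : Fin n → Lat d) : Subalgebra ℂ (Laur d) :=
  Algebra.adjoin ℂ {x | ∃ α ∈ NA a, x = mono α}

/-- The monomial t^u, u ∈ ℕA, as an element of S_A. -/
def smono (a : Fin n → Lat d) (u : Lat d) (hu : u ∈ NA a) : ↥(SAlg a) :=
  ⟨mono u, Algebra.subset_adjoin ⟨u, hu, rfl⟩⟩

/-- The underlying ℂ-vector space of the monomial module ℂ{E}: finitely supported
functions on `E`. -/
abbrev wMod (d : ℕ) (E : Set (Lat d)) := ↥(Finsupp.supported ℂ ℂ E)

/-- The action of the monomial t^w on ℂ{E}: shift the degree by `w`, truncate back to `E`. -/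
def wAct {d : ℕ} (E : Set (Lat d)) (w : Lat d) : wMod d E →ₗ[ℂ] wMod d E :=
  (Finsupp.restrictDom ℂ ℂ E).comp
    ((Finsupp.lmapDomain ℂ ℂ (fun γ => γ + w)).comp (Finsupp.supported ℂ ℂ E).subtype)

/-- The elements annihilated by some power of the ideal generated by the t^{a_i}, i ∉ F. -/
def torsionAt (a : Fin n → Lat d) (F : Set (Fin n)) {ML : Type} [AddCommGroup ML]
    [Module ℂ ML] (TL : (u : Lat d) → u ∈ NA a → (ML →ₗ[ℂ] ML)) : Set ML :=
  {y | ∃ k : ℕ, ∀ f : Fin k → Fin n, (∀ j, f j ∉ F) →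
    ∀ h : (∑ j, a (f j)) ∈ NA a, TL (∑ j, a (f j)) h y = 0}

/-- The toric ideal I_A ⊆ R_A = ℂ[∂_1,…,∂_n]. -/
def toricIdeal (a : Fin n → Lat d) : Ideal (MvPolynomial (Fin n) ℂ) :=
  RingHom.ker (MvPolynomial.aeval (fun i => mono (a i)) : MvPolynomial (Fin n) ℂ →ₐ[ℂ] Laur d)

/-- The ideal I_F^A = I_A + ⟨∂_i : a_i ∉ F⟩ of R_A. -/
def IFA (a : Fin n → Lat d) (F : Set (Fin n)) : Ideal (MvPolynomial (Fin n) ℂ) :=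
  toricIdeal a ⊔ Ideal.span {p | ∃ i, i ∉ F ∧ p = MvPolynomial.X i}

/-- An R_A-submodule is graded: it is spanned by its homogeneous elements. -/
def IsGradedSubR {d n : ℕ} {M : Type} [AddCommGroup M] [Module ℂ M]
    [Module (MvPolynomial (Fin n) ℂ) M]
    (decomp : Lat d → Submodule ℂ M) (N : Submodule (MvPolynomial (Fin n) ℂ) M) : Prop :=
  N = Submodule.span (MvPolynomial (Fin n) ℂ) ((N : Set M) ∩ ⋃ γ : Lat d, (decomp γ : Set M))

/-- `h` is the primitive integral support function of the facet `G`. -/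
def IsPISF (a : Fin n → Lat d) (G : Set (Fin n)) (h : Lat d →ₗ[ℤ] ℤ) : Prop :=
  (∃ x, h x = 1) ∧ (∀ i, 0 ≤ h (a i)) ∧ (∀ i, h (a i) = 0 ↔ i ∈ G)

/-- The ℂ-linear extension of an integral linear form to ℂ^d. -/
def hC {d : ℕ} (h : Lat d →ₗ[ℤ] ℤ) (β : CS d) : ℂ :=
  ∑ j : Fin d, β j * ((h (Pi.single j 1) : ℤ) : ℂ)


/-- Auxiliary: a full-rank submodule of ℤ^d has torsion quotient. -/
lemma exists_smul_mem_of_finrank_eq {d : ℕ} (N : Submodule ℤ (Lat d))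
    (h : Module.finrank ℤ N = d) (x : Lat d) : ∃ m : ℕ, 0 < m ∧ (m : ℤ) • x ∈ N := by
  by_contra hcon
  push_neg at hcon
  have hxN : ∀ c : ℤ, c ≠ 0 → c • x ∉ N := by
    intro c hc hmem
    rcases Int.natAbs_eq c with hcabs | hcabs
    · exact hcon c.natAbs (Int.natAbs_pos.mpr hc)
        (by rw [show ((c.natAbs : ℤ)) = c by omega]; exact hmem)
    · refine hcon c.natAbs (Int.natAbs_pos.mpr hc) ?_
      rw [show ((c.natAbs : ℤ)) = -c by omega, neg_smul]
      exact N.neg_mem hmem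
  let b := Module.finBasis ℤ N
  set ι := Fin (Module.finrank ℤ ↥N) with hι
  let w : Option ι → Lat d := fun o => o.elim x (fun i => (b i : Lat d))
  have hw : LinearIndependent ℤ w := by
    rw [Fintype.linearIndependent_iff]
    intro g hg
    rw [Fintype.sum_option] at hg
    have hsum : (∑ i : ι, g (some i) • ((b i : N) : Lat d)) ∈ N := by
      exact N.sum_mem (fun i _ => N.smul_mem _ (b i).2)
    have hg0 : g none = 0 := by
      by_contra hgn
      refine hxN (g none) hgn ?_
      have hswap : g none • x + (∑ i : ι, g (some i) • ((b i : N) : Lat d)) = 0 := by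
        simpa [w] using hg
      have : g none • x = -(∑ i : ι, g (some i) • ((b i : N) : Lat d)) :=
        eq_neg_of_add_eq_zero_left hswap
      rw [this]
      exact N.neg_mem hsum
    have hrest : (∑ i : ι, g (some i) • (b i : N)) = 0 := by
      apply Subtype.coe_injective
      push_cast
      have := hg
      simp only [w, Option.elim, hg0, zero_smul, zero_add] at this
      simpa using this
    have := Fintype.linearIndependent_iff.mp b.linearIndependent (fun i => g (some i)) hrest
    intro o
    cases o with
    | none => exact hg0
    | some i => exact this i
  have hcard := hw.fintype_card_le_finrank
  rw [Fintype.card_option, Fintype.card_fin, h, Module.finrank_pi, Fintype.card_fin] at hcard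
  omega

lemma toR_add {d : ℕ} (x y : Lat d) : toR (x + y) = toR x + toR y := by
  funext j; simp [toR]

lemma cone_zero_mem {d n : ℕ} (a : Fin n → Lat d) (G : Set (Fin n)) : (0 : Fin d → ℝ) ∈ cone a G :=
  ⟨0, fun _ => le_refl _, fun _ _ => rfl, by simp⟩

lemma cone_add_mem {d n : ℕ} (a : Fin n → Lat d) (G : Set (Fin n)) {x y : Fin d → ℝ}
    (hx : x ∈ cone a G) (hy : y ∈ cone a G) : x + y ∈ cone a G := by
  obtain ⟨c, hc0, hcs, hcx⟩ := hx
  obtain ⟨e, he0, hes, hey⟩ := hy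
  refine ⟨c + e, fun i => add_nonneg (hc0 i) (he0 i),
    fun i hi => by simp [hcs i hi, hes i hi], ?_⟩
  rw [hcx, hey, ← Finset.sum_add_distrib]
  exact Finset.sum_congr rfl fun i _ => by simp [add_smul]

lemma cone_smul_mem {d n : ℕ} (a : Fin n → Lat d) (G : Set (Fin n)) {x : Fin d → ℝ} {t : ℝ}
    (ht : 0 ≤ t) (hx : x ∈ cone a G) : t • x ∈ cone a G := by
  obtain ⟨c, hc0, hcs, hcx⟩ := hx
  refine ⟨t • c, fun i => mul_nonneg ht (hc0 i), fun i hi => by simp [hcs i hi], ?_⟩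
  rw [hcx, Finset.smul_sum]
  exact Finset.sum_congr rfl fun i _ => by simp [smul_smul]

lemma cone_single_mem {d n : ℕ} (a : Fin n → Lat d) (G : Set (Fin n)) {i : Fin n}
    (hi : i ∈ G) : toR (a i) ∈ cone a G := by
  classical
  refine ⟨fun j => if j = i then 1 else 0, fun j => by dsimp; split <;> norm_num,
    fun j hj => by dsimp; split <;> [exact absurd (by simp_all) hj; rfl], ?_⟩
  rw [Finset.sum_eq_single i (fun j _ hj => by simp [hj]) (by simp)]
  simp

lemma cone_mono_univ {d n : ℕ} (a : Fin n → Lat d) (G : Set (Fin n)) :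
    cone a G ⊆ cone a Set.univ := by
  rintro x ⟨c, hc0, _, hcx⟩
  exact ⟨c, hc0, fun i hi => absurd (Set.mem_univ i) hi, hcx⟩

lemma toR_closure_mem_cone {d n : ℕ} (a : Fin n → Lat d) (G : Set (Fin n)) {p : Lat d}
    (hp : p ∈ AddSubmonoid.closure (a '' G)) : toR p ∈ cone a G := by
  induction hp using AddSubmonoid.closure_induction with
  | mem x hx =>
      obtain ⟨i, hi, rfl⟩ := hx
      exact cone_single_mem a G hi
  | zero =>
      have h0 : toR (0 : Lat d) = 0 := by funext j; simp [toR]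
      rw [h0]; exact cone_zero_mem a G
  | add x y _ _ hx hy => rw [toR_add]; exact cone_add_mem a G hx hy

lemma span_int_diff {M : Type*} [AddCommGroup M] (s : Set M) {x : M}
    (hx : x ∈ Submodule.span ℤ s) :
    ∃ p ∈ AddSubmonoid.closure s, ∃ q ∈ AddSubmonoid.closure s, x = p - q := by
  have hx' : x ∈ AddSubgroup.closure s := by
    rw [← Submodule.span_int_eq_addSubgroupClosure]; exact hx
  refine AddSubgroup.closure_induction
    (p := fun y _ => ∃ p ∈ AddSubmonoid.closure s, ∃ q ∈ AddSubmonoid.closure s, y = p - q)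
    (fun y hy => ⟨y, AddSubmonoid.subset_closure hy, 0, zero_mem _, by simp⟩)
    ⟨0, zero_mem _, 0, zero_mem _, by simp⟩
    (fun y z _ _ hy hz => ?_) (fun y _ hy => ?_) hx'
  · obtain ⟨p, hp, q, hq, rfl⟩ := hy
    obtain ⟨p', hp', q', hq', rfl⟩ := hz
    exact ⟨p + p', add_mem hp hp', q + q', add_mem hq hq', by abel⟩
  · obtain ⟨p, hp, q, hq, rfl⟩ := hy
    exact ⟨q, hq, p, hp, by abel⟩

/-- A face of full dimension is the whole set of columns. -/
lemma face_full_dim_eq_univ {d n : ℕ} (a : Fin n → Lat d) (G : Set (Fin n))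
    (hG : IsFace a G) (hdim : dimF a G = d) : G = Set.univ := by
  refine Set.eq_univ_of_forall fun i => ?_
  obtain ⟨m, hm, hmem⟩ :=
    exists_smul_mem_of_finrank_eq (Submodule.span ℤ (a '' G)) hdim (a i)
  obtain ⟨p, hp, q, hq, hpq⟩ := span_int_diff (a '' G) hmem
  have hsum : (m : ℤ) • a i + q = p := by rw [hpq]; abel
  have hRsum : toR ((m : ℤ) • a i) + toR q = toR p := by
    rw [← toR_add, hsum]
  have hx : toR ((m : ℤ) • a i) = (m : ℝ) • toR (a i) := by
    funext j; simp [toR]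
  have hxu : toR ((m : ℤ) • a i) ∈ cone a Set.univ := by
    rw [hx]
    exact cone_smul_mem a _ (by positivity) (cone_single_mem a _ (Set.mem_univ i))
  have hyu : toR q ∈ cone a Set.univ := cone_mono_univ a G (toR_closure_mem_cone a G hq)
  have hsG : toR ((m : ℤ) • a i) + toR q ∈ cone a G := by
    rw [hRsum]; exact toR_closure_mem_cone a G hp
  have hxG : toR ((m : ℤ) • a i) ∈ cone a G := (hG.1 _ _ hxu hyu hsG).1
  have h1 : toR (a i) ∈ cone a G := by
    have hm' : (0 : ℝ) < (m : ℝ) := by exact_mod_cast hm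
    have := cone_smul_mem a G (le_of_lt (inv_pos.mpr hm')) hxG
    rwa [hx, smul_smul, inv_mul_cancel₀ (ne_of_gt hm'), one_smul] at this
  exact hG.2 i h1

/-- For a face `F ⪯ A` and a finitely generated ℤ^d-graded
S_A-submodule `M` of ℂ[ℤ^d] (a monomial module, with degree set `E` a finite union of
translates s + ℕA), every graded component of the top cohomology H^{d_{A/F}}(℧•_F(M))
has ℂ-dimension at most 1. -/
theorem top_local_cohomology_dim_le_one
    {d n : ℕ} (hd : 0 < d) (hn : 0 < n) (a : Fin n → Lat d)
    (hZA : SpansZ a) (hPt : Pointed a)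
    (F : Set (Fin n)) (hF : IsFace a F)
    (E : Set (Lat d))
    (hE : ∃ S : Finset (Lat d), E = ⋃ s ∈ S, {γ : Lat d | ∃ u ∈ NA a, γ = s + u})
    (ε : Set (Fin n) → Set (Fin n) → ℂ)
    (hval : ∀ G' G'' : FaceT a, G'.1 ⊆ G''.1 → dimF a G''.1 = dimF a G'.1 + 1 →
      ε G'.1 G''.1 = 1 ∨ ε G'.1 G''.1 = -1)
    (hsq : ∀ (γ : Lat d) (j : ℤ) (c : FaceT a → ℂ),
      c ∈ ishChain a E F j γ → ishDelta a ε (ishDelta a ε c) = 0) :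
    ∀ γ : Lat d, Module.finrank ℂ (ishH a E ε F (d : ℤ) γ) ≤ 1 := by
  intro γ
  set S : Set (FaceT a) :=
    {G : FaceT a | F ⊆ G.1 ∧ (dimF a G.1 : ℤ) = (d : ℤ) ∧ γ ∈ locE a E G.1} with hS
  -- Every face in S equals univ, so S is a subsingleton.
  have hSsub : ∀ G ∈ S, ∀ G' ∈ S, G = G' := by
    intro G hG G' hG'
    have h1 : G.1 = Set.univ :=
      face_full_dim_eq_univ a G.1 G.2 (by exact_mod_cast hG.2.1)
    have h2 : G'.1 = Set.univ :=
      face_full_dim_eq_univ a G'.1 G'.2 (by exact_mod_cast hG'.2.1)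
    exact Subtype.ext (h1.trans h2.symm)
  -- The chain group in top degree has dimension at most 1.
  have hchain : Module.finrank ℂ (ishChain a E F (d : ℤ) γ) ≤ 1 := by
    set G₀ : FaceT a := if h : S.Nonempty then h.choose else ⟨F, hF⟩ with hG₀
    let π : ↥(ishChain a E F (d : ℤ) γ) →ₗ[ℂ] ℂ :=
      { toFun := fun c => c.1 G₀
        map_add' := fun x y => rfl
        map_smul' := fun r x => rfl }
    have hπ : Function.Injective π := by
      rw [← LinearMap.ker_eq_bot]
      ext c
      simp only [LinearMap.mem_ker, Submodule.mem_bot]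
      constructor
      · intro hc
        apply Subtype.ext
        funext G
        by_cases hGS : G ∈ S
        · have hne : S.Nonempty := ⟨G, hGS⟩
          have : G₀ = hne.choose := by simp [hG₀, hne]
          have hG₀S : G₀ ∈ S := this ▸ hne.choose_spec
          have : G = G₀ := hSsub G hGS G₀ hG₀S
          show c.1 G = 0
          rw [this]; exact hc
        · exact c.2 G hGS
      · intro hc; rw [hc]; rfl
    calc Module.finrank ℂ (ishChain a E F (d : ℤ) γ)
        ≤ Module.finrank ℂ ℂ := LinearMap.finrank_le_finrank_of_injective hπ
      _ = 1 := Module.finrank_self ℂ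
  have hZle : Module.finrank ℂ (ishZ a E ε F (d : ℤ) γ) ≤ 1 :=
    le_trans (Submodule.finrank_mono inf_le_left) hchain
  exact le_trans (Submodule.finrank_quotient_le _) hZle

end

end GKZ
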